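/- Correctness of the dynamic programming recursion for best-subset cascading reward: Fix items a_1,...,a_J with weights w(a_1) ≥ ... ≥ w(a_J) > w(a_⊥) and u-values in [0,1]. For 1 ≤ i ≤ J and 0 ≤ k ≤ min{m, J−i+1}, let F[i][k] be the maximum of f((a'_1,...,a'_k, a_⊥), u, w) over all subsequences (a'_1,...,a'_k) of (a_i,...,a_J) of length k (with F[i][0] = w(a_⊥)). Then F satisfies the recursion F[i][k] = max{ F[i+1][k], u(a_i)·w(a_i) + (1−u(a_i))·F[i+1][k−1] } for 1 ≤ i ≤ J−1 and 1 ≤ k ≤ min{m, J−i+1}, with F[J][1] = u(a_J)·w(a_J) + (1−u(a_J))·w(a_⊥). -/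

import Mathlib

/-- The cascading reward function. -/
noncomputable def cascadeF {α : Type*} (u w : α → ℝ) : List α → ℝ
  | [] => 0
  | a :: t => u a * w a + (1 - u a) * cascadeF u w t

/-- `bestF u w bot L k` is the maximum of `f((a'_1,…,a'_k, a_⊥), u, w)` over all
length-`k` subsequences `(a'_1,…,a'_k)` of the list `L`. -/
noncomputable def bestF {α : Type*} (u w : α → ℝ) (bot : α) (L : List α) (k : ℕ) : ℝ :=
  sSup {x : ℝ | ∃ s : List α, s.Sublist L ∧ s.length = k ∧ x = cascadeF u w (s ++ [bot])}

namespace DPAux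

variable {α : Type*} (u w : α → ℝ) (bot : α)

def S (L : List α) (k : ℕ) : Set ℝ :=
  {x : ℝ | ∃ s : List α, s.Sublist L ∧ s.length = k ∧ x = cascadeF u w (s ++ [bot])}

lemma finite_S (L : List α) (k : ℕ) : (S u w bot L k).Finite := by
  have : S u w bot L k ⊆ (fun s : List α => cascadeF u w (s ++ [bot])) ''
      {s : List α | s ∈ L.sublists} := by
    rintro x ⟨s, hs, _, rfl⟩
    exact ⟨s, by simpa using hs, rfl⟩
  exact Set.Finite.subset (Set.Finite.image _ (List.sublists L).finite_toSet) this

lemma nonempty_S (L : List α) (k : ℕ) (hk : k ≤ L.length) : (S u w bot L k).Nonempty := by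
  exact ⟨_, L.take k, L.take_sublist k, by simp [hk], rfl⟩

lemma bdd_S (L : List α) (k : ℕ) : BddAbove (S u w bot L k) :=
  (finite_S u w bot L k).bddAbove

lemma S_zero (L : List α) (hbot : u bot = 1) : S u w bot L 0 = {w bot} := by
  ext x
  constructor
  · rintro ⟨s, hs, hlen, rfl⟩
    rw [List.length_eq_zero_iff] at hlen
    subst hlen
    simp [cascadeF, hbot]
  · rintro rfl
    exact ⟨[], List.nil_sublist L, rfl, by simp [cascadeF, hbot]⟩

lemma S_full (L : List α) : S u w bot L L.length = {cascadeF u w (L ++ [bot])} := by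
  ext x
  constructor
  · rintro ⟨s, hs, hlen, rfl⟩
    simp [hs.eq_of_length hlen]
  · rintro rfl
    exact ⟨L, List.Sublist.refl L, rfl, rfl⟩

lemma S_cons (a : α) (rest : List α) (k : ℕ) (hk : 1 ≤ k) :
    S u w bot (a :: rest) k =
      S u w bot rest k ∪
        (fun x => u a * w a + (1 - u a) * x) '' S u w bot rest (k - 1) := by
  ext x
  constructor
  · rintro ⟨s, hs, hlen, rfl⟩
    rcases List.sublist_cons_iff.mp hs with h | ⟨r, rfl, hr⟩
    · exact Or.inl ⟨s, h, hlen, rfl⟩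
    · refine Or.inr ⟨cascadeF u w (r ++ [bot]), ⟨r, hr, ?_, rfl⟩, ?_⟩
      · simp at hlen; omega
      · simp [cascadeF]
  · rintro (⟨s, hs, hlen, rfl⟩ | ⟨y, ⟨s, hs, hlen, rfl⟩, rfl⟩)
    · exact ⟨s, hs.cons a, hlen, rfl⟩
    · exact ⟨a :: s, hs.cons₂ a, by simp [hlen]; omega, by simp [cascadeF]⟩

end DPAux

/-- Correctness of the dynamic programming recursion for the best-subset cascading
reward: with items sorted in descending order of weights, all above `w(a_⊥)`, the
optimal values satisfy `F[i][0] = w(a_⊥)`, `F[J][1] = u(a_J)w(a_J)+(1−u(a_J))w(a_⊥)`,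
and `F[i][k] = max{F[i+1][k], u(a_i)w(a_i)+(1−u(a_i))F[i+1][k−1]}`. -/
theorem dp_recursion_correct {α : Type*} (u w : α → ℝ) (bot : α)
    (a : α) (rest : List α)
    (hu : ∀ x ∈ a :: rest, 0 ≤ u x ∧ u x ≤ 1) (hbot : u bot = 1)
    (hsort : (a :: rest).Pairwise (fun x y => w y ≤ w x))
    (hw : ∀ x ∈ a :: rest, w bot < w x) :
    (∀ L : List α, bestF u w bot L 0 = w bot) ∧
    (bestF u w bot [a] 1 = u a * w a + (1 - u a) * w bot) ∧
    (∀ k : ℕ, 1 ≤ k → k ≤ rest.length →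
      bestF u w bot (a :: rest) k =
        max (bestF u w bot rest k)
            (u a * w a + (1 - u a) * bestF u w bot rest (k - 1))) ∧
    (bestF u w bot (a :: rest) (rest.length + 1) =
      u a * w a + (1 - u a) * bestF u w bot rest rest.length) := by
  have hbest : ∀ (L : List α) (k : ℕ),
      bestF u w bot L k = sSup (DPAux.S u w bot L k) := fun _ _ => rfl
  have hta : 0 ≤ 1 - u a := by
    have := (hu a (by simp)).2; linarith
  refine ⟨?_, ?_, ?_, ?_⟩
  · intro L
    rw [hbest, DPAux.S_zero u w bot L hbot, csSup_singleton]
  · have h1 : (1 : ℕ) = ([a] : List α).length := by simp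
    rw [hbest, h1, DPAux.S_full, csSup_singleton]
    simp [cascadeF, hbot]
  · intro k hk1 hk2
    rw [hbest, hbest, hbest, DPAux.S_cons u w bot a rest k hk1]
    rw [csSup_union (DPAux.bdd_S u w bot rest k)
      (DPAux.nonempty_S u w bot rest k hk2)
      ((DPAux.finite_S u w bot rest (k - 1)).image _).bddAbove
      ((DPAux.nonempty_S u w bot rest (k - 1) (by omega)).image _)]
    have hmono : Monotone (fun x : ℝ => u a * w a + (1 - u a) * x) :=
      fun x y hxy => by dsimp; nlinarith
    rw [← Monotone.map_csSup_of_continuousAt (by fun_prop) hmono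
      (DPAux.nonempty_S u w bot rest (k - 1) (by omega))
      (DPAux.bdd_S u w bot rest (k - 1))]
  · have h1 : rest.length + 1 = (a :: rest).length := by simp
    rw [hbest, hbest, h1, DPAux.S_full, DPAux.S_full, csSup_singleton, csSup_singleton]
    simp [cascadeF]
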